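/- Let t ≥ 2, let G be a graph, S ⊆ V(G) with |S| ≥ 2 such that G ⊕ S is K_t-free, and let u, v ∈ S. Then the graph induced by N(u) ∩ N(v) in G is a (t−1, t−1)-split graph; moreover, the pair (T, S') with T = (N(u) ∩ N(v)) \ S and S' = N(u) ∩ N(v) ∩ S is a (t−1,t−1)-split partition: G[T] is K_t-free and G[S'] is tK₁-free. -/

import Mathlib

/-- Subgraph complement `G ⊕ S`: flip adjacency of pairs with both endpoints in `S`. -/
def SimpleGraph.scompl {V : Type*} (G : SimpleGraph V) (S : Set V) : SimpleGraph V where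
  Adj u v := u ≠ v ∧ ((G.Adj u v ∧ ¬(u ∈ S ∧ v ∈ S)) ∨ (¬G.Adj u v ∧ u ∈ S ∧ v ∈ S))
  symm := by
    constructor
    rintro u v ⟨hne, h⟩
    refine ⟨hne.symm, ?_⟩
    rcases h with ⟨h1, h2⟩ | ⟨h1, h2, h3⟩
    · exact Or.inl ⟨h1.symm, fun hb => h2 ⟨hb.2, hb.1⟩⟩
    · exact Or.inr ⟨fun h => h1 h.symm, h3, h2⟩
  loopless := ⟨fun v h => h.1 rfl⟩

theorem common_nbhd_split {V : Type*} (G : SimpleGraph V) (t : ℕ) (ht : 2 ≤ t)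
    (S : Set V) (hS : 2 ≤ S.ncard)
    (hfree : ¬ ∃ s : Finset V, (G.scompl S).IsNClique t s)
    (u v : V) (hu : u ∈ S) (hv : v ∈ S) :
    ((G.neighborSet u ∩ G.neighborSet v) \ S) ∪ (G.neighborSet u ∩ G.neighborSet v ∩ S)
        = G.neighborSet u ∩ G.neighborSet v ∧
      Disjoint ((G.neighborSet u ∩ G.neighborSet v) \ S)
        (G.neighborSet u ∩ G.neighborSet v ∩ S) ∧
      (¬ ∃ s : Finset V, ↑s ⊆ (G.neighborSet u ∩ G.neighborSet v) \ S ∧ G.IsNClique t s) ∧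
      (¬ ∃ s : Finset V, ↑s ⊆ G.neighborSet u ∩ G.neighborSet v ∩ S ∧ Gᶜ.IsNClique t s) := by
  refine ⟨?_, ?_, ?_, ?_⟩
  · ext x; simp only [Set.mem_union, Set.mem_diff, Set.mem_inter_iff]; tauto
  · rw [Set.disjoint_left]; rintro x ⟨-, hxS⟩ ⟨-, h⟩; exact hxS h
  · rintro ⟨s, hsub, hcl, hcard⟩
    refine hfree ⟨s, ⟨?_, hcard⟩⟩
    intro x hx y hy hxy
    have hxS : (x : V) ∉ S := (hsub hx).2
    exact ⟨hxy, Or.inl ⟨hcl hx hy hxy, fun h => hxS h.1⟩⟩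
  · rintro ⟨s, hsub, hcl, hcard⟩
    refine hfree ⟨s, ⟨?_, hcard⟩⟩
    intro x hx y hy hxy
    have hadj := hcl hx hy hxy
    rw [SimpleGraph.compl_adj] at hadj
    exact ⟨hxy, Or.inr ⟨hadj.2, (hsub hx).2, (hsub hy).2⟩⟩
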